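/- Let f satisfy Mahler's Hypothesis and g be a polynomial, both in p variables, with deg f = m and deg g = q. Then the Dirichlet series ζ(s;f,g) = ∑_{k∈ℕ₀^p} g(k) f(k)^{-s} converges absolutely for Re(s) > (q+p)/m. -/

import Mathlib

open MvPolynomial

/-- Mahler's Hypothesis: `f` is non-constant, nonvanishing on `[0,∞)^p`, and its top-degree
homogeneous part is nonvanishing on `[0,∞)^p \ {0}`. -/
def MahlerHyp {p : ℕ} (f : MvPolynomial (Fin p) ℂ) : Prop :=
  0 < f.totalDegree ∧
  (∀ x : Fin p → ℝ, (∀ i, 0 ≤ x i) →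
    MvPolynomial.eval (fun i => (x i : ℂ)) f ≠ 0) ∧
  (∀ x : Fin p → ℝ, (∀ i, 0 ≤ x i) → x ≠ 0 →
    MvPolynomial.eval (fun i => (x i : ℂ))
      (MvPolynomial.homogeneousComponent f.totalDegree f) ≠ 0)

noncomputable def evR {p : ℕ} (P : MvPolynomial (Fin p) ℂ) (x : Fin p → ℝ) : ℂ :=
  MvPolynomial.eval (fun i => (x i : ℂ)) P

lemma evR_continuous {p : ℕ} (P : MvPolynomial (Fin p) ℂ) : Continuous (evR P) := by
  unfold evR
  exact P.continuous_eval.comp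
    (continuous_pi fun i => Complex.continuous_ofReal.comp (continuous_apply i))

lemma eval_homog_smul {p n : ℕ} {P : MvPolynomial (Fin p) ℂ} (hP : P.IsHomogeneous n)
    (c : ℂ) (x : Fin p → ℂ) :
    MvPolynomial.eval (fun i => c * x i) P = c ^ n * MvPolynomial.eval x P := by
  rw [MvPolynomial.eval_eq', MvPolynomial.eval_eq', Finset.mul_sum]
  refine Finset.sum_congr rfl fun d hd => ?_
  have hdeg : ∑ i, d i = n := by
    have h := hP (MvPolynomial.mem_support_iff.mp hd)
    simpa [Finsupp.weight, Finsupp.linearCombination, Finsupp.sum_fintype] using h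
  calc P.coeff d * ∏ i, (c * x i) ^ d i
      = P.coeff d * ((∏ i, c ^ d i) * ∏ i, x i ^ d i) := by
        rw [← Finset.prod_mul_distrib]; simp [mul_pow]
    _ = c ^ n * (P.coeff d * ∏ i, x i ^ d i) := by
        rw [Finset.prod_pow_eq_pow_sum, hdeg]; ring

lemma evR_smul {p n : ℕ} {P : MvPolynomial (Fin p) ℂ} (hP : P.IsHomogeneous n)
    (r : ℝ) (u : Fin p → ℝ) : evR P (r • u) = (r:ℂ) ^ n * evR P u := by
  unfold evR
  have h : (fun i => (((r • u) i : ℝ) : ℂ)) = fun i => (r:ℂ) * ((u i : ℝ):ℂ) := by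
    funext i; simp [Pi.smul_apply]
  rw [h]
  exact eval_homog_smul hP (r:ℂ) (fun i => ((u i : ℝ):ℂ))

lemma poly_growth {p : ℕ} (g : MvPolynomial (Fin p) ℂ) :
    ∃ C : ℝ, 0 ≤ C ∧ ∀ x : Fin p → ℝ,
      ‖evR g x‖ ≤ C * (1 + ‖x‖) ^ g.totalDegree := by
  unfold evR
  refine ⟨∑ d ∈ g.support, ‖g.coeff d‖, Finset.sum_nonneg (fun _ _ => norm_nonneg _), fun x => ?_⟩
  have h1 : (0:ℝ) ≤ 1 + ‖x‖ := by positivity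
  rw [MvPolynomial.eval_eq', Finset.sum_mul]
  refine (norm_sum_le _ _).trans (Finset.sum_le_sum fun d hd => ?_)
  rw [norm_mul]
  refine mul_le_mul_of_nonneg_left ?_ (norm_nonneg _)
  have key : ∀ i : Fin p, ‖((x i : ℂ))‖ ≤ 1 + ‖x‖ := fun i => by
    rw [Complex.norm_real]
    exact (norm_le_pi_norm x i).trans (by linarith)
  calc ‖∏ i, ((x i:ℂ)) ^ d i‖ = ∏ i, ‖(x i:ℂ)‖ ^ d i := by
        rw [norm_prod]; simp [norm_pow]
    _ ≤ ∏ i, (1 + ‖x‖) ^ d i :=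
        Finset.prod_le_prod (fun i _ => by positivity)
          (fun i _ => pow_le_pow_left₀ (norm_nonneg _) (key i) _)
    _ = (1+‖x‖) ^ (∑ i, d i) := by rw [← Finset.prod_pow_eq_pow_sum]
    _ ≤ (1+‖x‖) ^ g.totalDegree := by
        refine pow_le_pow_right₀ (by linarith [norm_nonneg x]) ?_
        have := MvPolynomial.le_totalDegree hd
        rwa [Finsupp.sum_fintype _ _ (fun _ => rfl)] at this

lemma const_of_exp_eq_one {G : ℝ → ℂ} (hG : Continuous G)
    (h1 : ∀ r, Complex.exp (G r) = 1) (r₀ r₁ : ℝ) : G r₀ = G r₁ := by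
  have hclopen : IsClopen {r | G r = G r₁} := by
    refine ⟨isClosed_eq hG continuous_const, ?_⟩
    rw [isOpen_iff_mem_nhds]
    intro r hr
    have hev : ∀ᶠ t in nhds r, dist (G t) (G r) < 1 :=
      Metric.tendsto_nhds.mp (hG.tendsto r) 1 one_pos
    filter_upwards [hev] with t ht
    obtain ⟨n, hn⟩ := Complex.exp_eq_one_iff.mp (h1 t)
    obtain ⟨m, hm⟩ := Complex.exp_eq_one_iff.mp (h1 r)
    have heq : n = m := by
      by_contra hne
      have h2 : dist (G t) (G r) = |((n - m : ℤ) : ℝ)| * (2 * Real.pi) := by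
        rw [dist_eq_norm, hn, hm, ← sub_mul]
        push_cast
        rw [norm_mul, norm_mul, norm_mul]
        have : ‖((n:ℂ) - (m:ℂ))‖ = |((n:ℝ) - (m:ℝ))| := by
          rw [show ((n:ℂ) - (m:ℂ)) = (((n:ℝ) - (m:ℝ) : ℝ) : ℂ) by push_cast; ring,
            Complex.norm_real, Real.norm_eq_abs]
        simp [this, Complex.norm_real,
          abs_of_nonneg Real.pi_nonneg]
      have h3 : (1:ℝ) ≤ |((n - m : ℤ) : ℝ)| := by
        rw [← Int.cast_abs]
        exact_mod_cast Int.one_le_abs (sub_ne_zero.mpr hne)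
      nlinarith [Real.pi_gt_three, ht]
    have hGt : G t = G r := by rw [hn, hm, heq]
    show G t = G r₁
    rw [hGt]; exact hr
  have := hclopen.eq_univ ⟨r₁, rfl⟩
  exact (Set.eq_univ_iff_forall.mp this r₀)

lemma summable_one_add_rpow {r : ℝ} (hr : 1 < r) :
    Summable (fun n : ℕ => (1 + (n:ℝ)) ^ (-r)) := by
  have h := (summable_nat_add_iff 1).mpr (Real.summable_nat_rpow_inv.mpr hr)
  refine h.congr fun n => ?_
  rw [Real.rpow_neg (by positivity)]
  push_cast
  ring_nf

lemma summable_pi_prod {a : ℕ → ℝ} (ha0 : ∀ n, 0 ≤ a n) (ha : Summable a) (p : ℕ) :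
    Summable (fun k : Fin p → ℕ => ∏ i, a (k i)) := by
  induction p with
  | zero => exact Summable.of_finite
  | succ n ih =>
    have h := ha.mul_of_nonneg ih ha0
      (fun k => Finset.prod_nonneg fun i _ => ha0 _)
    rw [← (Fin.consEquiv fun _ : Fin (n+1) => ℕ).summable_iff]
    refine h.congr fun q => ?_
    simp [Fin.prod_univ_succ]

set_option maxHeartbeats 1600000 in
lemma mahler_bounds {p : ℕ} (hp : 0 < p) (f : MvPolynomial (Fin p) ℂ) (hf : MahlerHyp f)
    (logf : (Fin p → ℝ) → ℂ) (hcont : ContinuousOn logf (Set.Ici 0))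
    (hexp : ∀ x ∈ Set.Ici (0 : Fin p → ℝ),
      Complex.exp (logf x) = MvPolynomial.eval (fun i => (x i : ℂ)) f) :
    ∃ c B : ℝ, 0 < c ∧ ∀ x : Fin p → ℝ, (∀ i, 0 ≤ x i) →
      c * (1 + ‖x‖) ^ f.totalDegree ≤ ‖evR f x‖ ∧ |(logf x).im| ≤ B := by
  obtain ⟨hm, hnv, htop⟩ := hf
  set m := f.totalDegree with hmdef
  set ftop := MvPolynomial.homogeneousComponent m f with hftop
  haveI : Nonempty (Fin p) := ⟨⟨0, hp⟩⟩
  -- nonnegativity of scaled vectors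
  have hsmul_mem : ∀ (r : ℝ), 0 ≤ r → ∀ (u : Fin p → ℝ), (∀ i, 0 ≤ u i) →
      ∀ i, 0 ≤ (r • u) i := fun r hr u hu i => mul_nonneg hr (hu i)
  -- the positive unit sphere
  set K : Set (Fin p → ℝ) := {u | (∀ i, 0 ≤ u i) ∧ ‖u‖ = 1} with hK
  have hKcl : IsClosed K := by
    have h1 : IsClosed {u : Fin p → ℝ | ∀ i, 0 ≤ u i} := by
      have : {u : Fin p → ℝ | ∀ i, 0 ≤ u i} = ⋂ i, (fun u : Fin p → ℝ => u i) ⁻¹' Set.Ici 0 := by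
        ext u; simp
      rw [this]
      exact isClosed_iInter fun i => isClosed_Ici.preimage (continuous_apply i)
    exact h1.inter (isClosed_eq continuous_norm continuous_const)
  have hKcomp : IsCompact K := by
    have : K ⊆ Metric.closedBall 0 1 := fun u hu => by
      simp [Metric.mem_closedBall, hu.2.le, dist_zero_right, hu.2]
    exact (isCompact_closedBall (0 : Fin p → ℝ) 1).of_isClosed_subset hKcl this
  have hKne : K.Nonempty := ⟨fun _ => 1, fun i => zero_le_one, by
    simpa using (Pi.norm_const (1:ℝ)).trans (norm_one)⟩
  have hKne0 : ∀ u ∈ K, u ≠ 0 := fun u hu h0 => by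
    rw [hK] at hu; rw [h0] at hu; simpa using hu.2
  have hftopne : ∀ u ∈ K, evR ftop u ≠ 0 := fun u hu => htop u hu.1 (hKne0 u hu)
  -- minimum of |ftop| on K
  obtain ⟨u₀, hu₀K, hc₀min'⟩ :=
    hKcomp.exists_isMinOn hKne ((evR_continuous ftop).norm.continuousOn)
  have hc₀min : ∀ u ∈ K, ‖evR ftop u₀‖ ≤ ‖evR ftop u‖ := fun u hu => hc₀min' hu
  set c₀ : ℝ := ‖evR ftop u₀‖ with hc₀
  have hc₀pos : 0 < c₀ := norm_pos_iff.mpr (hftopne u₀ hu₀K)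
  -- error bound constant M
  have hpg := fun d : ℕ => poly_growth (MvPolynomial.homogeneousComponent d f)
  choose C hC0 hCb using hpg
  set M : ℝ := ∑ d ∈ Finset.range m,
    C d * 2 ^ (MvPolynomial.homogeneousComponent d f).totalDegree with hM
  have hM0 : 0 ≤ M := Finset.sum_nonneg fun d _ => mul_nonneg (hC0 d) (by positivity)
  -- decomposition
  have hdecomp : ∀ (r : ℝ) (u : Fin p → ℝ),
      evR f (r • u) = ∑ d ∈ Finset.range (m+1),
        (r:ℂ)^d * evR (MvPolynomial.homogeneousComponent d f) u := by
    intro r u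
    conv_lhs => rw [show f = ∑ d ∈ Finset.range (m+1), MvPolynomial.homogeneousComponent d f
      from (MvPolynomial.sum_homogeneousComponent f).symm]
    unfold evR
    rw [map_sum]
    exact Finset.sum_congr rfl fun d _ =>
      evR_smul (MvPolynomial.homogeneousComponent_isHomogeneous d f) r u
  have herr : ∀ u ∈ K, ∀ r : ℝ, 1 ≤ r →
      ‖evR f (r • u) - (r:ℂ)^m * evR ftop u‖ ≤ M * r^(m-1) := by
    intro u hu r hr
    have hr0 : (0:ℝ) ≤ r := le_trans zero_le_one hr
    rw [hdecomp r u, Finset.sum_range_succ]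
    simp only [hftop, add_sub_cancel_right]
    calc ‖∑ d ∈ Finset.range m, (r:ℂ)^d * evR (MvPolynomial.homogeneousComponent d f) u‖
        ≤ ∑ d ∈ Finset.range m, ‖(r:ℂ)^d * evR (MvPolynomial.homogeneousComponent d f) u‖ :=
          norm_sum_le _ _
      _ ≤ ∑ d ∈ Finset.range m,
          (C d * 2 ^ (MvPolynomial.homogeneousComponent d f).totalDegree) * r^(m-1) := by
          refine Finset.sum_le_sum fun d hd => ?_
          rw [norm_mul, norm_pow, Complex.norm_real, Real.norm_eq_abs, abs_of_nonneg hr0]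
          have h1 : ‖evR (MvPolynomial.homogeneousComponent d f) u‖ ≤
              C d * 2 ^ (MvPolynomial.homogeneousComponent d f).totalDegree := by
            have := hCb d u
            rwa [hu.2, show (1:ℝ)+1 = 2 by norm_num] at this
          have h2 : r ^ d ≤ r ^ (m-1) :=
            pow_le_pow_right₀ hr (by have := Finset.mem_range.mp hd; omega)
          calc r^d * ‖evR (MvPolynomial.homogeneousComponent d f) u‖
              ≤ r^(m-1) * (C d * 2 ^ (MvPolynomial.homogeneousComponent d f).totalDegree) := by
                apply mul_le_mul h2 h1 (norm_nonneg _) (by positivity)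
            _ = _ := by ring
      _ = M * r^(m-1) := by rw [hM, Finset.sum_mul]
  -- threshold T
  set T : ℝ := max 1 (2*M/c₀ + 1) with hT
  have hT1 : (1:ℝ) ≤ T := le_max_left _ _
  have hT0 : (0:ℝ) < T := lt_of_lt_of_le one_pos hT1
  have hTM : ∀ r : ℝ, T ≤ r → M * r^(m-1) ≤ c₀/2 * r^m := by
    intro r hr
    have hr1 : (1:ℝ) ≤ r := le_trans hT1 hr
    have hr0 : (0:ℝ) < r := lt_of_lt_of_le one_pos hr1
    have h2 : 2*M/c₀ + 1 ≤ r := le_trans (le_max_right _ _) hr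
    have h3 : 2*M ≤ c₀ * r := by
      rw [div_add' _ _ _ (ne_of_gt hc₀pos), div_le_iff₀ hc₀pos] at h2
      nlinarith
    have h4 : r^m = r * r^(m-1) := by
      rw [← pow_succ']
      congr 1
      omega
    rw [h4]
    have h5 : 0 ≤ r^(m-1) := by positivity
    nlinarith
  -- lower bound along rays
  have hlow : ∀ u ∈ K, ∀ r : ℝ, T ≤ r → c₀/2 * r^m ≤ ‖evR f (r • u)‖ := by
    intro u hu r hr
    have hr1 : (1:ℝ) ≤ r := le_trans hT1 hr
    have hr0 : (0:ℝ) ≤ r := by linarith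
    have h1 := herr u hu r hr1
    have h2 : c₀ * r^m ≤ ‖(r:ℂ)^m * evR ftop u‖ := by
      rw [norm_mul, norm_pow, Complex.norm_real, Real.norm_eq_abs, abs_of_nonneg hr0]
      calc c₀ * r^m ≤ ‖evR ftop u‖ * r^m :=
            mul_le_mul_of_nonneg_right (hc₀min u hu) (by positivity)
        _ = r^m * ‖evR ftop u‖ := by ring
    have h3 := norm_sub_norm_le ((r:ℂ)^m * evR ftop u) (evR f (r • u))
    have h4 := hTM r hr
    have h5 := norm_sub_rev (evR f (r • u)) ((r:ℂ)^m * evR ftop u)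
    linarith
  -- the quotient W
  have hWre : ∀ u ∈ K, ∀ r : ℝ, T ≤ r →
      (1:ℝ)/2 ≤ (evR f (r • u) / ((r:ℂ)^m * evR ftop u)).re := by
    intro u hu r hr
    have hr1 : (1:ℝ) ≤ r := le_trans hT1 hr
    have hr0 : (0:ℝ) ≤ r := by linarith
    set D := (r:ℂ)^m * evR ftop u with hD
    have hDnorm : c₀ * r^m ≤ ‖D‖ := by
      rw [hD, norm_mul, norm_pow, Complex.norm_real, Real.norm_eq_abs, abs_of_nonneg hr0]
      calc c₀ * r^m ≤ ‖evR ftop u‖ * r^m :=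
            mul_le_mul_of_nonneg_right (hc₀min u hu) (by positivity)
        _ = r^m * ‖evR ftop u‖ := by ring
    have hDpos : 0 < ‖D‖ := lt_of_lt_of_le (by positivity) hDnorm
    have hDne : D ≠ 0 := norm_pos_iff.mp hDpos
    set W := evR f (r • u) / D with hW
    have hWsub : ‖W - 1‖ ≤ 1/2 := by
      have : W - 1 = (evR f (r • u) - D) / D := by
        rw [hW, sub_div, div_self hDne]
      rw [this, norm_div]
      rw [div_le_iff₀ hDpos]
      calc ‖evR f (r • u) - D‖ ≤ M * r^(m-1) := herr u hu r hr1
        _ ≤ c₀/2 * r^m := hTM r hr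
        _ ≤ 1/2 * ‖D‖ := by nlinarith
        _ = 1/2 * ‖D‖ := rfl
    have := Complex.abs_re_le_norm (W - 1)
    have h5 : |(W - 1).re| ≤ 1/2 := le_trans this hWsub
    have h6 : (W - 1).re = W.re - 1 := by simp
    rw [h6] at h5
    have := abs_le.mp h5
    linarith [this.1]
  -- compact ball bounds
  set Q : Set (Fin p → ℝ) := {x | (∀ i, 0 ≤ x i) ∧ ‖x‖ ≤ T} with hQ
  have hQcl : IsClosed Q := by
    have h1 : IsClosed {u : Fin p → ℝ | ∀ i, 0 ≤ u i} := by
      have : {u : Fin p → ℝ | ∀ i, 0 ≤ u i} = ⋂ i, (fun u : Fin p → ℝ => u i) ⁻¹' Set.Ici 0 := by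
        ext u; simp
      rw [this]
      exact isClosed_iInter fun i => isClosed_Ici.preimage (continuous_apply i)
    exact h1.inter (isClosed_le continuous_norm continuous_const)
  have hQcomp : IsCompact Q := by
    have : Q ⊆ Metric.closedBall 0 T := fun x hx => by
      simp [Metric.mem_closedBall, dist_zero_right, hx.2]
    exact (isCompact_closedBall (0 : Fin p → ℝ) T).of_isClosed_subset hQcl this
  have hQne : Q.Nonempty := ⟨0, fun i => le_refl 0, by simp; linarith⟩
  have hQsub : Q ⊆ Set.Ici (0 : Fin p → ℝ) := fun x hx => by
    rw [Set.mem_Ici]; intro i; exact hx.1 i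
  obtain ⟨B₀, hB₀⟩ := hQcomp.exists_bound_of_continuousOn (hcont.mono hQsub)
  obtain ⟨x₁, hx₁Q, hc₁min'⟩ := hQcomp.exists_isMinOn hQne ((evR_continuous f).norm.continuousOn)
  set c₁ : ℝ := ‖evR f x₁‖ with hc₁
  have hc₁pos : 0 < c₁ := norm_pos_iff.mpr (hnv x₁ hx₁Q.1)
  have hc₁min : ∀ x ∈ Q, c₁ ≤ ‖evR f x‖ := fun x hx => hc₁min' hx
  -- ray argument: bound on the imaginary part
  have hray : ∀ u ∈ K, ∀ t : ℝ, T ≤ t → |(logf (t • u)).im| ≤ B₀ + Real.pi := by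
    intro u hu t ht
    set Wf : ℝ → ℂ := fun ρ => evR f (ρ • u) / ((ρ:ℂ)^m * evR ftop u) with hWf
    set G : ℝ → ℂ := fun r => logf ((max r T) • u) - (m:ℂ) * ((Real.log (max r T) : ℝ):ℂ)
      - Complex.log (evR ftop u) - Complex.log (Wf (max r T)) with hG
    have hρT : ∀ r : ℝ, T ≤ max r T := fun r => le_max_right r T
    have hρpos : ∀ r : ℝ, (0:ℝ) < max r T := fun r => lt_of_lt_of_le hT0 (hρT r)
    have hρmem : ∀ r : ℝ, (max r T) • u ∈ Set.Ici (0 : Fin p → ℝ) := fun r => by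
      rw [Set.mem_Ici]; intro i
      exact hsmul_mem _ (hρpos r).le u hu.1 i
    have hWre' : ∀ r : ℝ, (1:ℝ)/2 ≤ (Wf (max r T)).re := fun r => hWre u hu _ (hρT r)
    have hWne : ∀ r : ℝ, Wf (max r T) ≠ 0 := fun r h0 => by
      have := hWre' r; rw [h0] at this; norm_num at this
    have hDne : ∀ r : ℝ, ((max r T : ℝ):ℂ)^m * evR ftop u ≠ 0 := fun r =>
      mul_ne_zero (pow_ne_zero _ (Complex.ofReal_ne_zero.mpr (hρpos r).ne')) (hftopne u hu)
    have hfne : ∀ r : ℝ, evR f ((max r T) • u) ≠ 0 := fun r =>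
      hnv _ (fun i => hsmul_mem _ (hρpos r).le u hu.1 i)
    have hexpG : ∀ r : ℝ, Complex.exp (G r) = 1 := by
      intro r
      rw [hG]
      simp only
      rw [Complex.exp_sub, Complex.exp_sub, Complex.exp_sub]
      rw [show Complex.exp (logf ((max r T) • u)) = evR f ((max r T) • u) from hexp _ (hρmem r)]
      rw [Complex.ofReal_log (hρpos r).le, Complex.exp_nat_mul,
        Complex.exp_log (Complex.ofReal_ne_zero.mpr (hρpos r).ne'),
        Complex.exp_log (hftopne u hu), Complex.exp_log (hWne r)]
      rw [hWf]
      simp only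
      rw [div_div, div_div, ← mul_assoc]
      have hcancel : (((max r T:ℝ):ℂ)^m * evR ftop u) *
          (evR f ((max r T) • u) / (((max r T:ℝ):ℂ)^m * evR ftop u)) = evR f ((max r T) • u) := by
        rw [mul_comm, div_mul_cancel₀ _ (hDne r)]
      rw [hcancel]
      exact div_self (hfne r)
    have hGcont : Continuous G := by
      have hmaxc : Continuous fun r : ℝ => max r T := continuous_id.max continuous_const
      have hsmulc : Continuous fun r : ℝ => (max r T) • u := hmaxc.smul continuous_const
      have h1 : Continuous fun r : ℝ => logf ((max r T) • u) :=
        hcont.comp_continuous hsmulc hρmem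
      have h2 : Continuous fun r : ℝ => ((Real.log (max r T) : ℝ):ℂ) := by
        refine Complex.continuous_ofReal.comp ?_
        refine (Real.continuousOn_log.comp_continuous hmaxc ?_)
        intro r; simp [(hρpos r).ne']
      have hWc : Continuous fun r : ℝ => Wf (max r T) := by
        rw [hWf]
        refine Continuous.div ((evR_continuous f).comp hsmulc) ?_ hDne
        exact (Complex.continuous_ofReal.comp hmaxc).pow m |>.mul continuous_const
      have h4 : Continuous fun r : ℝ => Complex.log (Wf (max r T)) := by
        rw [continuous_iff_continuousAt]
        intro r
        exact (continuousAt_clog (Complex.mem_slitPlane_iff.mpr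
          (Or.inl (by linarith [hWre' r])))).comp hWc.continuousAt
      exact ((h1.sub (continuous_const.mul h2)).sub continuous_const).sub h4
    have hGconst := const_of_exp_eq_one hGcont hexpG t T
    have him := congrArg Complex.im hGconst
    rw [hG] at him
    simp only [max_self, max_eq_left ht, Complex.sub_im, Complex.mul_im, Complex.natCast_im,
      Complex.ofReal_im, Complex.natCast_re, Complex.ofReal_re, Complex.log_im,
      mul_zero, zero_mul, add_zero, sub_zero] at him
    have harg : ∀ r : ℝ, |Complex.arg (Wf (max r T))| ≤ Real.pi / 2 := fun r =>
      Complex.abs_arg_le_pi_div_two_iff.mpr (by linarith [hWre' r])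
    have hargt := harg t
    have hargT := harg T
    rw [max_eq_left ht] at hargt
    rw [max_self] at hargT
    have hTu : (T • u) ∈ Q := by
      refine ⟨fun i => hsmul_mem _ hT0.le u hu.1 i, ?_⟩
      rw [norm_smul, Real.norm_eq_abs, abs_of_pos hT0, hu.2, mul_one]
    have hb := hB₀ _ hTu
    have him2 : |(logf (T • u)).im| ≤ B₀ := by
      refine le_trans ?_ hb
      exact Complex.abs_im_le_norm _
    have := abs_le.mp him2
    have h1 := abs_le.mp hargt
    have h2 := abs_le.mp hargT
    rw [abs_le]
    have hπ : 0 < Real.pi := Real.pi_pos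
    constructor <;> nlinarith [him, this.1, this.2]
  -- final constants
  refine ⟨min (c₁ / (1+T)^m) (c₀ / 2^(m+1)), B₀ + Real.pi, ?_, ?_⟩
  · exact lt_min (by positivity) (by positivity)
  intro x hx
  by_cases hcase : ‖x‖ ≤ T
  · have hxQ : x ∈ Q := ⟨hx, hcase⟩
    constructor
    · calc min (c₁ / (1+T)^m) (c₀ / 2^(m+1)) * (1 + ‖x‖) ^ m
          ≤ (c₁ / (1+T)^m) * (1+T)^m := by
            refine mul_le_mul (min_le_left _ _) ?_ (by positivity) (by positivity)
            exact pow_le_pow_left₀ (by positivity) (by linarith) m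
        _ = c₁ := by field_simp
        _ ≤ ‖evR f x‖ := hc₁min x hxQ
    · refine le_trans ?_ (le_add_of_nonneg_right Real.pi_pos.le)
      refine le_trans ?_ (hB₀ x hxQ)
      exact Complex.abs_im_le_norm _
  · push_neg at hcase
    set t : ℝ := ‖x‖ with htdef
    have ht : T ≤ t := hcase.le
    have ht1 : (1:ℝ) ≤ t := le_trans hT1 ht
    have ht0 : (0:ℝ) < t := lt_of_lt_of_le one_pos ht1
    set u : Fin p → ℝ := t⁻¹ • x with hu_def
    have huK : u ∈ K := by
      constructor
      · intro i
        exact mul_nonneg (inv_nonneg.mpr ht0.le) (hx i)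
      · rw [hu_def, norm_smul, Real.norm_eq_abs, abs_of_pos (inv_pos.mpr ht0), ← htdef,
          inv_mul_cancel₀ ht0.ne']
    have hxtu : x = t • u := by
      rw [hu_def, smul_inv_smul₀ ht0.ne']
    constructor
    · have h1 := hlow u huK t ht
      rw [← hxtu] at h1
      refine le_trans ?_ h1
      calc min (c₁ / (1+T)^m) (c₀ / 2^(m+1)) * (1 + t) ^ m
          ≤ (c₀ / 2^(m+1)) * (2*t)^m := by
            refine mul_le_mul (min_le_right _ _) ?_ (by positivity) (by positivity)
            exact pow_le_pow_left₀ (by positivity) (by linarith) m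
        _ = c₀/2 * t^m := by
            rw [mul_pow, pow_succ]
            field_simp
    · have := hray u huK t ht
      rw [← hxtu] at this
      exact this

set_option maxHeartbeats 1000000 in
/-- under Mahler's Hypothesis, the Dirichlet series
`ζ(s;f,g) = ∑_{k∈ℕ₀^p} g(k) f(k)^{-s}` converges absolutely for `Re s > (q+p)/m`. -/
theorem stmt9 (p : ℕ) (f g : MvPolynomial (Fin p) ℂ) (hf : MahlerHyp f)
    (logf : (Fin p → ℝ) → ℂ) (hcont : ContinuousOn logf (Set.Ici 0))
    (hexp : ∀ x ∈ Set.Ici (0 : Fin p → ℝ),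
      Complex.exp (logf x) = MvPolynomial.eval (fun i => (x i : ℂ)) f)
    (s : ℂ) (hs : ((g.totalDegree : ℝ) + p) / (f.totalDegree : ℝ) < s.re) :
    Summable (fun k : Fin p → ℕ =>
      ‖MvPolynomial.eval (fun i => ((k i : ℝ) : ℂ)) g
          * Complex.exp (-s * logf (fun i => (k i : ℝ)))‖) := by
  rcases Nat.eq_zero_or_pos p with hp0 | hp
  · subst hp0
    exact Summable.of_finite
  obtain ⟨c, B, hc, hbound⟩ := mahler_bounds hp f hf logf hcont hexp
  obtain ⟨Cg, hCg0, hCgb⟩ := poly_growth g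
  set m := f.totalDegree with hmdef
  set q := g.totalDegree with hqdef
  set σ := s.re with hσdef
  have hm : 0 < m := hf.1
  have hmR : (0:ℝ) < (m:ℝ) := by exact_mod_cast hm
  have hpR : (0:ℝ) < (p:ℝ) := by exact_mod_cast hp
  have hσpos : 0 < σ := lt_of_le_of_lt (by positivity) hs
  set r : ℝ := ((m:ℝ) * σ - (q:ℝ)) / (p:ℝ) with hrdef
  have hr1 : 1 < r := by
    rw [div_lt_iff₀ hmR] at hs
    rw [hrdef, lt_div_iff₀ hpR]
    nlinarith
  have hr0 : 0 < r := lt_trans one_pos hr1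
  have hsummable := summable_pi_prod (a := fun n => (1+(n:ℝ))^(-r))
    (fun n => by positivity) (summable_one_add_rpow hr1) p
  set D : ℝ := Cg * c^(-σ) * Real.exp (|s.im| * B) with hDdef
  refine Summable.of_nonneg_of_le (fun k => norm_nonneg _) ?_ (hsummable.mul_left D)
  intro k
  set x : Fin p → ℝ := fun i => (k i : ℝ) with hxdef
  have hx0 : ∀ i, 0 ≤ x i := fun i => Nat.cast_nonneg _
  set t : ℝ := ‖x‖ with htdef
  have ht0 : (0:ℝ) ≤ t := norm_nonneg _
  have h1t : (0:ℝ) < 1 + t := by linarith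
  obtain ⟨hfl, him⟩ := hbound x hx0
  set w : ℂ := logf x with hwdef
  have hwre : Real.exp w.re = ‖evR f x‖ := by
    have h := hexp x (Set.mem_Ici.mpr (fun i => hx0 i))
    have := congrArg norm h
    rw [Complex.norm_exp] at this
    rw [this]
    rfl
  have hnorm : ‖MvPolynomial.eval (fun i => ((k i : ℝ) : ℂ)) g
      * Complex.exp (-s * logf (fun i => (k i : ℝ)))‖
      = ‖evR g x‖ * Real.exp ((-s * w).re) := by
    rw [norm_mul]
    congr 1
    rw [Complex.norm_exp]
  rw [hnorm]
  have hre : (-s * w).re = -σ * w.re + s.im * w.im := by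
    simp [Complex.mul_re, hσdef]
    ring
  rw [hre, Real.exp_add]
  -- bound the |f|^{-σ} factor
  have hfpos : (0:ℝ) < ‖evR f x‖ := lt_of_lt_of_le (by positivity) hfl
  have hexp1 : Real.exp (-σ * w.re) = ‖evR f x‖ ^ (-σ) := by
    rw [Real.rpow_def_of_pos hfpos, ← hwre, Real.log_exp]
    ring_nf
  have hexp1le : ‖evR f x‖ ^ (-σ) ≤ c^(-σ) * (1+t) ^ ((m:ℝ) * (-σ)) := by
    have h2 : (c * (1+t)^m) ^ (-σ) = c^(-σ) * (1+t) ^ ((m:ℝ) * (-σ)) := by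
      rw [Real.mul_rpow hc.le (by positivity), ← Real.rpow_natCast (1+t) m,
        ← Real.rpow_mul h1t.le]
    rw [← h2]
    exact Real.rpow_le_rpow_of_nonpos (by positivity) hfl (by linarith)
  have hexp2 : Real.exp (s.im * w.im) ≤ Real.exp (|s.im| * B) := by
    refine Real.exp_le_exp.mpr ?_
    calc s.im * w.im ≤ |s.im * w.im| := le_abs_self _
      _ = |s.im| * |w.im| := abs_mul _ _
      _ ≤ |s.im| * B := mul_le_mul_of_nonneg_left him (abs_nonneg _)
  have hgb : ‖evR g x‖ ≤ Cg * (1+t) ^ ((q:ℝ)) := by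
    rw [Real.rpow_natCast]
    exact hCgb x
  -- the product bound
  have hprod : (1+t) ^ ((q:ℝ) + (m:ℝ)*(-σ)) ≤ ∏ i, (1 + (k i:ℝ)) ^ (-r) := by
    have hexp_eq : (q:ℝ) + (m:ℝ)*(-σ) = (-r) * (p:ℝ) := by
      rw [hrdef]; field_simp; ring
    rw [hexp_eq]
    have hki : ∀ i, (k i:ℝ) ≤ t := fun i => by
      calc (k i:ℝ) ≤ |x i| := by rw [hxdef]; exact le_abs_self _
        _ ≤ ‖x‖ := by rw [← Real.norm_eq_abs]; exact norm_le_pi_norm x i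
    calc (1+t) ^ ((-r) * (p:ℝ)) = ((1+t) ^ (-r)) ^ (p:ℕ) := by
          rw [Real.rpow_mul h1t.le, Real.rpow_natCast]
      _ = ∏ _i : Fin p, (1+t) ^ (-r) := by
          rw [Finset.prod_const, Finset.card_univ, Fintype.card_fin]
      _ ≤ ∏ i, (1 + (k i:ℝ)) ^ (-r) := by
          refine Finset.prod_le_prod (fun i _ => by positivity) (fun i _ => ?_)
          refine Real.rpow_le_rpow_of_nonpos (by positivity) ?_ (by linarith)
          linarith [hki i]
  -- combine
  calc ‖evR g x‖ * (Real.exp (-σ * w.re) * Real.exp (s.im * w.im))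
      ≤ (Cg * (1+t) ^ ((q:ℝ))) * ((c^(-σ) * (1+t) ^ ((m:ℝ) * (-σ))) * Real.exp (|s.im| * B)) := by
        refine mul_le_mul hgb ?_ (by positivity) (by positivity)
        rw [hexp1]
        refine mul_le_mul hexp1le hexp2 (Real.exp_pos _).le (by positivity)
    _ = D * (1+t) ^ ((q:ℝ) + (m:ℝ)*(-σ)) := by
        rw [Real.rpow_add h1t, hDdef]; ring
    _ ≤ D * ∏ i, (1 + (k i:ℝ)) ^ (-r) := by
        refine mul_le_mul_of_nonneg_left hprod ?_
        rw [hDdef]; positivity
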